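/- arXiv:2503.10964 — 5 statements merged into one kernel-verified Lean document; each statement's English description precedes it below -/
import Mathlib

section
/- Suppose Z ∈ 𝕊^{n+m} is positive semidefinite with block decomposition Z = [[Z₁₁, Z₁₂],[Z₁₂ᵀ, Z₂₂]], and suppose ⟨Z, M Mᵀ⟩ = 0 where M = [P B R^{-1/2}; R^{1/2}] with R positive definite. If Z = U Uᵀ with U = [U₁; U₂] (U₁ ∈ ℝ^{n×n}, U₂ ∈ ℝ^{m×n}), then U₂ = −R⁻¹ Bᵀ P U₁, and consequently Z₁₂ = −Z₁₁ P B R⁻¹ and Z₂₂ = R⁻¹ Bᵀ P Z₁₁ P B R⁻¹. -/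
open Matrix

open scoped ComplexOrder in
/-- The positive semidefinite square root of a positive semidefinite matrix
(the definition `Matrix.PosSemidef.sqrt` of the older Mathlib, since removed). -/
noncomputable def Matrix.PosSemidef.sqrt {n : Type*} [Fintype n] [DecidableEq n]
    {𝕜 : Type*} [RCLike 𝕜] {A : Matrix n n 𝕜} (hA : A.PosSemidef) : Matrix n n 𝕜 :=
  hA.1.eigenvectorUnitary.1 * diagonal ((↑) ∘ (√·) ∘ hA.1.eigenvalues) *
  (star hA.1.eigenvectorUnitary : Matrix n n 𝕜)

lemma posSemidef_sqrt_transpose_real {m : ℕ} {R : Matrix (Fin m) (Fin m) ℝ}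
    (hR : R.PosSemidef) : (hR.sqrt)ᵀ = hR.sqrt := by
  unfold Matrix.PosSemidef.sqrt
  simp only [Matrix.transpose_mul, Matrix.diagonal_transpose, Matrix.star_eq_conjTranspose, Matrix.conjTranspose_eq_transpose_of_trivial,
    Matrix.transpose_transpose, Matrix.mul_assoc]

lemma posSemidef_sqrt_mul_self_real {m : ℕ} {R : Matrix (Fin m) (Fin m) ℝ}
    (hR : R.PosSemidef) : hR.sqrt * hR.sqrt = R := by
  unfold Matrix.PosSemidef.sqrt
  have hU : (star hR.1.eigenvectorUnitary : Matrix (Fin m) (Fin m) ℝ) *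
      hR.1.eigenvectorUnitary.1 = 1 := Unitary.coe_star_mul_self _
  have hD : diagonal ((↑) ∘ (√·) ∘ hR.1.eigenvalues) *
      diagonal ((↑) ∘ (√·) ∘ hR.1.eigenvalues) =
      diagonal (RCLike.ofReal ∘ hR.1.eigenvalues : Fin m → ℝ) := by
    rw [Matrix.diagonal_mul_diagonal]
    congr 1; funext i
    simp [Real.mul_self_sqrt (hR.eigenvalues_nonneg i)]
  conv_rhs => rw [hR.1.spectral_theorem, Unitary.conjStarAlgAut_apply]
  calc _ = hR.1.eigenvectorUnitary.1 * diagonal ((↑) ∘ (√·) ∘ hR.1.eigenvalues) *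
        ((star hR.1.eigenvectorUnitary : Matrix (Fin m) (Fin m) ℝ) *
        hR.1.eigenvectorUnitary.1) * diagonal ((↑) ∘ (√·) ∘ hR.1.eigenvalues) *
        (star hR.1.eigenvectorUnitary : Matrix (Fin m) (Fin m) ℝ) := by
          simp only [Matrix.mul_assoc]; rfl
    _ = _ := by rw [hU, Matrix.mul_one, Matrix.mul_assoc _ (diagonal _) (diagonal _), hD]

lemma trace_transpose_mul_self_eq_zero {m n : ℕ} {A : Matrix (Fin m) (Fin n) ℝ}
    (h : (Aᵀ * A).trace = 0) : A = 0 := by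
  have h' : ∀ j, (Aᵀ * A) j j = 0 := by
    intro j
    have hnn : ∀ j, 0 ≤ (Aᵀ * A) j j := by
      intro j
      simp only [Matrix.mul_apply, Matrix.transpose_apply]
      exact Finset.sum_nonneg fun i _ => mul_self_nonneg _
    have := Finset.sum_eq_zero_iff_of_nonneg (fun j _ => hnn j) |>.mp h j (Finset.mem_univ j)
    exact this
  ext i j
  have := h' j
  simp only [Matrix.mul_apply, Matrix.transpose_apply] at this
  have := (Finset.sum_eq_zero_iff_of_nonneg (fun i _ => mul_self_nonneg (A i j))).mp this i
    (Finset.mem_univ i)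
  simpa using mul_self_eq_zero.mp this

/-- Complementary slackness step recovering the optimal LQR primal variable from the
dual Riccati solution: if `Z = U Uᵀ ⪰ 0` has zero trace inner product with `M Mᵀ`
where `M = [P B R^{-1/2}; R^{1/2}]` and `R ≻ 0`, then `U₂ = −R⁻¹ Bᵀ P U₁`, and hence
`Z₁₂ = −Z₁₁ P B R⁻¹` and `Z₂₂ = R⁻¹ Bᵀ P Z₁₁ P B R⁻¹`. -/
theorem complementary_slackness_recovery {n m : ℕ}
    (P : Matrix (Fin n) (Fin n) ℝ) (B : Matrix (Fin n) (Fin m) ℝ)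
    (R : Matrix (Fin m) (Fin m) ℝ) (hP : P.IsSymm) (hR : R.PosDef)
    (Z11 : Matrix (Fin n) (Fin n) ℝ) (Z12 : Matrix (Fin n) (Fin m) ℝ)
    (Z22 : Matrix (Fin m) (Fin m) ℝ)
    (U1 : Matrix (Fin n) (Fin n) ℝ) (U2 : Matrix (Fin m) (Fin n) ℝ)
    (Z : Matrix (Fin n ⊕ Fin m) (Fin n ⊕ Fin m) ℝ)
    (hZdef : Z = Matrix.fromBlocks Z11 Z12 Z12ᵀ Z22)
    (hZpsd : Z.PosSemidef)
    (M : Matrix (Fin n ⊕ Fin m) (Fin m) ℝ)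
    (hM : M = Matrix.fromRows (P * B * (hR.posSemidef.sqrt)⁻¹) hR.posSemidef.sqrt)
    (htr : (Z * (M * Mᵀ)).trace = 0)
    (hZU : Z = Matrix.fromRows U1 U2 * (Matrix.fromRows U1 U2)ᵀ) :
    U2 = -(R⁻¹ * Bᵀ * P * U1) ∧
      Z12 = -(Z11 * P * B * R⁻¹) ∧
      Z22 = R⁻¹ * Bᵀ * P * Z11 * P * B * R⁻¹ := by
  set S := hR.posSemidef.sqrt with hSdef
  have hSsymm : Sᵀ = S := by
    exact posSemidef_sqrt_transpose_real hR.posSemidef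
  have hSS : S * S = R := posSemidef_sqrt_mul_self_real hR.posSemidef
  have hdetR : R.det ≠ 0 := ne_of_gt hR.det_pos
  have hdetS : S.det ≠ 0 := by
    intro h
    apply hdetR
    rw [← hSS, Matrix.det_mul, h, mul_zero]
  have hSunit : IsUnit S.det := isUnit_iff_ne_zero.mpr hdetS
  have hRunit : IsUnit R.det := isUnit_iff_ne_zero.mpr hdetR
  -- trace = 0 implies Mᵀ U = 0
  set U := Matrix.fromRows U1 U2 with hUdef
  have htr2 : ((Mᵀ * U)ᵀ * (Mᵀ * U)).trace = 0 := by
    have : (Mᵀ * U)ᵀ * (Mᵀ * U) = Uᵀ * (M * Mᵀ) * U := by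
      rw [Matrix.transpose_mul, Matrix.transpose_transpose]
      simp only [Matrix.mul_assoc]
    rw [this]
    calc (Uᵀ * (M * Mᵀ) * U).trace = (U * (Uᵀ * (M * Mᵀ))).trace := by
          rw [Matrix.trace_mul_comm]
      _ = (Z * (M * Mᵀ)).trace := by rw [← Matrix.mul_assoc, ← hZU]
      _ = 0 := htr
  have hMU : Mᵀ * U = 0 := trace_transpose_mul_self_eq_zero htr2
  -- compute Mᵀ U
  have hMU2 : S⁻¹ * Bᵀ * P * U1 + S * U2 = 0 := by
    have hPt : Pᵀ = P := hP
    have : Mᵀ * U = (P * B * S⁻¹)ᵀ * U1 + Sᵀ * U2 := by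
      rw [hM, hUdef, Matrix.transpose_fromRows, Matrix.fromCols_mul_fromRows]
    rw [this] at hMU
    rw [Matrix.transpose_mul, Matrix.transpose_mul, Matrix.transpose_nonsing_inv,
      hSsymm, hPt] at hMU
    simpa only [Matrix.mul_assoc] using hMU
  have hU2 : U2 = -(R⁻¹ * Bᵀ * P * U1) := by
    have h1 : S * (S⁻¹ * Bᵀ * P * U1 + S * U2) = 0 := by rw [hMU2, Matrix.mul_zero]
    have h2 : Bᵀ * P * U1 + R * U2 = 0 := by
      have hSSinv : S * S⁻¹ = 1 := Matrix.mul_nonsing_inv S hSunit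
      calc Bᵀ * P * U1 + R * U2
          = S * S⁻¹ * (Bᵀ * P * U1) + S * S * U2 := by
            rw [hSSinv, hSS, Matrix.one_mul]
        _ = S * (S⁻¹ * Bᵀ * P * U1 + S * U2) := by
            rw [Matrix.mul_add]; simp only [Matrix.mul_assoc]
        _ = 0 := h1
    have h3 : R * U2 = -(Bᵀ * P * U1) := by
      rw [eq_neg_iff_add_eq_zero, add_comm]; exact h2
    have hRRinv : R⁻¹ * R = 1 := Matrix.nonsing_inv_mul R hRunit
    calc U2 = R⁻¹ * R * U2 := by rw [hRRinv, Matrix.one_mul]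
      _ = R⁻¹ * (R * U2) := by rw [Matrix.mul_assoc]
      _ = R⁻¹ * -(Bᵀ * P * U1) := by rw [h3]
      _ = -(R⁻¹ * Bᵀ * P * U1) := by
            rw [Matrix.mul_neg]; simp only [Matrix.mul_assoc]
  -- block identities
  have hblocks : Matrix.fromBlocks Z11 Z12 Z12ᵀ Z22 =
      Matrix.fromBlocks (U1 * U1ᵀ) (U1 * U2ᵀ) (U2 * U1ᵀ) (U2 * U2ᵀ) := by
    rw [← hZdef, hZU, hUdef, Matrix.transpose_fromRows, Matrix.fromRows_mul_fromCols]
  have hZ11 : Z11 = U1 * U1ᵀ := by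
    have := congrArg Matrix.toBlocks₁₁ hblocks
    simpa [Matrix.toBlocks_fromBlocks₁₁] using this
  have hZ12 : Z12 = U1 * U2ᵀ := by
    have := congrArg Matrix.toBlocks₁₂ hblocks
    simpa [Matrix.toBlocks_fromBlocks₁₂] using this
  have hZ22 : Z22 = U2 * U2ᵀ := by
    have := congrArg Matrix.toBlocks₂₂ hblocks
    simpa [Matrix.toBlocks_fromBlocks₂₂] using this
  have hPt : Pᵀ = P := hP
  have hRt : Rᵀ = R := by
    simpa [Matrix.conjTranspose_eq_transpose_of_trivial] using hR.isHermitian.eq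
  have hRinvT : (R⁻¹)ᵀ = R⁻¹ := by rw [Matrix.transpose_nonsing_inv, hRt]
  have hU2T : U2ᵀ = -(U1ᵀ * P * B * R⁻¹) := by
    rw [hU2]
    simp only [Matrix.transpose_neg, Matrix.transpose_mul, hRinvT, hPt,
      Matrix.transpose_transpose, Matrix.mul_assoc]
  refine ⟨hU2, ?_, ?_⟩
  · rw [hZ12, hU2T, hZ11]
    simp only [Matrix.mul_neg, Matrix.mul_assoc]
  · rw [hZ22, hU2T, hU2, hZ11]
    simp only [Matrix.neg_mul, Matrix.mul_neg, neg_neg, Matrix.mul_assoc]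
end

section
/- Consider the scalar LQR instance with A = 0, B = 1, Q = R = W = 1 (cost J(k) = k + 1/k for feedback gain u = −kx, stabilizing region k > 0). Then: (i) J attains its unique minimum J⋆ = 2 at k = 1; (ii) J'(k) = 1 − 1/k²; and (iii) the ratio (J(k) − 2)/(J'(k))² tends to +∞ as k → ∞, so no constant μ > 0 satisfies μ(J(k) − 2) ≤ (1/2)(J'(k))² for all k > 0. -/
open Filter

/-- The scalar LQR cost `J(k) = k + 1/k` (with `A = 0, B = 1, Q = R = W = 1`,
stabilizing region `k > 0`): (i) `J` attains its unique minimum `2` at `k = 1`;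
(ii) `J'(k) = 1 − 1/k²`; (iii) `(J(k) − 2)/(J'(k))² → ∞` as `k → ∞`, so no
`μ > 0` satisfies the gradient dominance inequality globally on `(0,∞)`. -/
theorem scalar_lqr_no_global_gradient_dominance :
    ((fun k : ℝ => k + 1 / k) 1 = 2 ∧
      ∀ k : ℝ, 0 < k → k ≠ 1 → 2 < k + 1 / k) ∧
    (∀ k : ℝ, 0 < k → HasDerivAt (fun k : ℝ => k + 1 / k) (1 - 1 / k ^ 2) k) ∧
    (Tendsto (fun k : ℝ => ((k + 1 / k) - 2) / (1 - 1 / k ^ 2) ^ 2) atTop atTop ∧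
      ¬ ∃ μ : ℝ, 0 < μ ∧ ∀ k : ℝ, 0 < k →
        μ * ((k + 1 / k) - 2) ≤ 1 / 2 * (1 - 1 / k ^ 2) ^ 2) := by
  refine ⟨⟨by norm_num, ?_⟩, ?_, ?_, ?_⟩
  · intro k hk hk1
    have hinv : k * (1 / k) = 1 := by field_simp
    have hne : k - 1 ≠ 0 := sub_ne_zero.mpr hk1
    have h : (0:ℝ) < (k - 1) ^ 2 := by positivity
    nlinarith
  · intro k hk
    have h1 := (hasDerivAt_id k).add ((hasDerivAt_id k).inv hk.ne')
    have he : (1:ℝ) - 1 / k ^ 2 = 1 + -1 / k ^ 2 := by ring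
    rw [he]
    simpa [one_div, Pi.add_def, Pi.inv_def] using h1
  · refine tendsto_atTop_mono' atTop ?_ (tendsto_id.atTop_div_const (by norm_num : (0:ℝ) < 4))
    filter_upwards [eventually_ge_atTop (2:ℝ)] with k hk
    have hk0 : (0:ℝ) < k := by linarith
    have hden : (0:ℝ) < (1 - 1 / k ^ 2) ^ 2 := by
      have h1 : (1:ℝ) / k ^ 2 < 1 := by
        rw [div_lt_one (by positivity)]; nlinarith
      have h2 : (0:ℝ) < 1 - 1 / k ^ 2 := by linarith
      positivity
    rw [le_div_iff₀ hden]
    have hk4 : (0:ℝ) < k ^ 4 := by positivity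
    have h1 : ((k + 1 / k) - 2) * k ^ 4 = k ^ 3 * (k - 1) ^ 2 := by
      field_simp; ring
    have h2 : (id k / 4 * (1 - 1 / k ^ 2) ^ 2) * k ^ 4 = k / 4 * (k ^ 2 - 1) ^ 2 := by
      field_simp; simp only [id]
    rw [← mul_le_mul_iff_left₀ hk4, h1, h2]
    nlinarith [sq_nonneg (k - 1), sq_nonneg k]
  · rintro ⟨μ, hμ, h⟩
    set k : ℝ := max 2 (2 / μ + 1) with hkdef
    have hk2 : (2:ℝ) ≤ k := le_max_left _ _
    have hkμ : 2 / μ < k := lt_of_lt_of_le (by linarith) (le_max_right _ _)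
    have hk0 : (0:ℝ) < k := by linarith
    have hμk : 2 < μ * k := by
      rw [div_lt_iff₀ hμ] at hkμ; linarith [hkμ]
    have hineq := h k hk0
    have hk4 : (0:ℝ) < k ^ 4 := by positivity
    rw [← mul_le_mul_iff_left₀ hk4] at hineq
    have h1 : (μ * ((k + 1 / k) - 2)) * k ^ 4 = μ * (k ^ 3 * (k - 1) ^ 2) := by
      field_simp; ring
    have h2 : (1 / 2 * (1 - 1 / k ^ 2) ^ 2) * k ^ 4 = 1 / 2 * (k ^ 2 - 1) ^ 2 := by
      field_simp
    rw [h1, h2] at hineq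
    have hA : 2 * (k ^ 2 * (k - 1) ^ 2) < μ * k * (k ^ 2 * (k - 1) ^ 2) := by
      apply mul_lt_mul_of_pos_right hμk; nlinarith
    have hB : μ * k * (k ^ 2 * (k - 1) ^ 2) = μ * (k ^ 3 * (k - 1) ^ 2) := by ring
    have hC : (1:ℝ) / 2 * (k ^ 2 - 1) ^ 2 ≤ 2 * (k ^ 2 * (k - 1) ^ 2) := by
      nlinarith [mul_nonneg (mul_nonneg (sq_nonneg (k - 1))
        (show (0:ℝ) ≤ 3 * k + 1 by linarith)) (show (0:ℝ) ≤ k - 1 by linarith)]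
    linarith [hA, hineq, hC, hB.le, hB.ge]
end

section
/- For the function J(k) = k + 1/k on (0, ∞), for every sublevel set {k > 0 : J(k) ≤ ν} with ν > 2, there exists μ > 0 such that μ(J(k) − 2) ≤ (1/2)(1 − 1/k²)² for all k in the sublevel set. -/
/-- Sublevel-set gradient dominance of the scalar LQR cost `J(k) = k + 1/k` on
`(0,∞)` (minimum value `2`, derivative `1 − 1/k²`): for every `ν > 2` there is
`μ > 0` with `μ(J(k) − 2) ≤ ½(1 − 1/k²)²` on the sublevel set `{k > 0 : J(k) ≤ ν}`. -/
theorem scalar_lqr_sublevel_gradient_dominance :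
    ∀ ν : ℝ, 2 < ν → ∃ μ : ℝ, 0 < μ ∧
      ∀ k : ℝ, 0 < k → k + 1 / k ≤ ν →
        μ * ((k + 1 / k) - 2) ≤ 1 / 2 * (1 - 1 / k ^ 2) ^ 2 := by
  intro ν hν
  have hν0 : 0 < ν := by linarith
  refine ⟨1 / (2 * ν ^ 3), by positivity, ?_⟩
  intro k hk hkν
  have hkν' : k ≤ ν := by
    have : 0 < 1 / k := by positivity
    linarith
  have h3 : k ^ 3 ≤ ν ^ 3 := pow_le_pow_left₀ hk.le hkν' 3
  have hs : (k - 1) ^ 2 * k ^ 3 ≤ (k - 1) ^ 2 * ((k + 1) ^ 2 * ν ^ 3) := by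
    apply mul_le_mul_of_nonneg_left _ (sq_nonneg _)
    nlinarith [pow_pos hν0 3, sq_nonneg k]
  rw [div_mul_eq_mul_div, one_mul, div_le_iff₀ (by positivity : (0:ℝ) < 2 * ν ^ 3)]
  have hk2 : k ≠ 0 := hk.ne'
  field_simp
  nlinarith [hs, pow_pos hk 2, pow_pos hk 4, pow_pos hν0 3]
end

section
/- Let R ∈ 𝕊ᵐ be positive definite, X ∈ 𝕊ⁿ positive definite, and Y, K⋆ arbitrary matrices of sizes m×n. Define f(Y, X) = tr(Q⋆X + X⁻¹YᵀRY + (K⋆)ᵀRY + YᵀRK⋆) where Q⋆ ∈ 𝕊ⁿ. Then f(Y,X) − f(0,X⋆) ≥ tr(X⁻¹ Yᵀ R Y) ≥ λ_min(R)·λ_min(X⁻¹)·‖Y‖_F², provided the first-order optimality inequality tr(Q⋆(X − X⋆)) + tr(2(RK⋆)ᵀY) ≥ 0 holds. -/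
open Matrix

attribute [local instance] Matrix.frobeniusSeminormedAddCommGroup

/-- Smallest eigenvalue of a Hermitian real matrix. -/
noncomputable def minEig {k : ℕ} {M : Matrix (Fin k) (Fin k) ℝ} (h : M.IsHermitian) : ℝ :=
  ⨅ i, h.eigenvalues i

/-- The convex reformulation cost of LQR in the lifted variables:
`f(Y, X) = tr(Q⋆X + X⁻¹YᵀRY + (K⋆)ᵀRY + YᵀRK⋆)`. -/
noncomputable def lqrCvx {n m : ℕ} (Qstar : Matrix (Fin n) (Fin n) ℝ)
    (R : Matrix (Fin m) (Fin m) ℝ) (Kstar : Matrix (Fin m) (Fin n) ℝ)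
    (Y : Matrix (Fin m) (Fin n) ℝ) (X : Matrix (Fin n) (Fin n) ℝ) : ℝ :=
  (Qstar * X + X⁻¹ * (Yᵀ * R * Y) + Kstarᵀ * (R * Y) + Yᵀ * (R * Kstar)).trace

lemma trace_nonneg_of_psd {k : ℕ} {A : Matrix (Fin k) (Fin k) ℝ} (hA : A.PosSemidef) :
    0 ≤ A.trace := by
  rw [Matrix.trace]
  refine Finset.sum_nonneg fun i _ => ?_
  exact hA.diag_nonneg

lemma trace_mul_psd_nonneg {k : ℕ} {A B : Matrix (Fin k) (Fin k) ℝ}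
    (hA : A.PosSemidef) (hB : B.PosSemidef) : 0 ≤ (A * B).trace := by
  open scoped MatrixOrder in obtain ⟨C, rfl⟩ := CStarAlgebra.nonneg_iff_eq_star_mul_self.mp hB.nonneg
  rw [← mul_assoc, Matrix.trace_mul_cycle]
  exact trace_nonneg_of_psd (hA.mul_mul_conjTranspose_same C)

lemma minEig_nonneg {k : ℕ} {B : Matrix (Fin k) (Fin k) ℝ} (hB : B.PosSemidef) :
    0 ≤ minEig hB.1 := by
  rcases isEmpty_or_nonempty (Fin k) with h | h
  · simp [minEig, Real.iInf_of_isEmpty]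
  · exact le_ciInf fun i => hB.eigenvalues_nonneg i

lemma sub_minEig_smul_psd {k : ℕ} {B : Matrix (Fin k) (Fin k) ℝ} (hB : B.PosSemidef) :
    (B - minEig hB.1 • (1 : Matrix (Fin k) (Fin k) ℝ)).PosSemidef := by
  set c := minEig hB.1 with hc
  have hce : ∀ i, c ≤ hB.1.eigenvalues i := fun i =>
    ciInf_le (Set.Finite.bddBelow (Set.finite_range _)) i
  have hspec := hB.1.spectral_theorem
  set U : Matrix (Fin k) (Fin k) ℝ := (hB.1.eigenvectorUnitary : Matrix (Fin k) (Fin k) ℝ)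
  have hU : U * star U = 1 := (Matrix.mem_unitaryGroup_iff).mp hB.1.eigenvectorUnitary.2
  have key : B - c • 1 = U * (diagonal (fun i => hB.1.eigenvalues i - c)) * star U := by
    have h1 : (c • (1 : Matrix (Fin k) (Fin k) ℝ)) = U * (c • 1) * star U := by
      rw [Matrix.mul_smul, Matrix.smul_mul, mul_one, hU]
    rw [h1]
    calc B - U * (c • 1) * star U
        = U * diagonal (RCLike.ofReal ∘ hB.1.eigenvalues) * star U - U * (c • 1) * star U := by
          (conv_lhs => rw [hspec]); rfl
      _ = U * (diagonal (RCLike.ofReal ∘ hB.1.eigenvalues) - c • 1) * star U := by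
          rw [← Matrix.sub_mul, ← Matrix.mul_sub]
      _ = U * (diagonal (fun i => hB.1.eigenvalues i - c)) * star U := by
          congr 2
          ext i j
          by_cases hij : i = j <;>
            simp [Matrix.diagonal_apply, Matrix.one_apply, hij, RCLike.ofReal_real_eq_id,
              Matrix.sub_apply]
  rw [key]
  have hd : (diagonal (fun i => hB.1.eigenvalues i - c)).PosSemidef :=
    Matrix.posSemidef_diagonal_iff.mpr fun i => sub_nonneg.mpr (hce i)
  simpa [Matrix.star_eq_conjTranspose] using hd.mul_mul_conjTranspose_same U

lemma minEig_mul_trace_le {k : ℕ} {A B : Matrix (Fin k) (Fin k) ℝ}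
    (hA : A.PosSemidef) (hB : B.PosSemidef) :
    minEig hB.1 * A.trace ≤ (A * B).trace := by
  have h := trace_mul_psd_nonneg hA (sub_minEig_smul_psd hB)
  rw [Matrix.mul_sub, Matrix.trace_sub, Matrix.mul_smul, mul_one, Matrix.trace_smul,
    smul_eq_mul] at h
  linarith


lemma trace_transpose_mul_self_eq_norm_sq {n m : ℕ} (Y : Matrix (Fin m) (Fin n) ℝ) :
    (Yᵀ * Y).trace = ‖Y‖ ^ 2 := by
  have h0 : (0:ℝ) ≤ ∑ i, ∑ j, ‖Y i j‖ ^ (2:ℝ) :=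
    Finset.sum_nonneg fun i _ => Finset.sum_nonneg fun j _ => Real.rpow_nonneg (norm_nonneg _) _
  rw [frobenius_norm_def, ← Real.rpow_natCast _ 2, ← Real.rpow_mul h0]
  norm_num
  rw [Matrix.trace]
  simp only [Matrix.diag_apply, Matrix.mul_apply, Matrix.transpose_apply, sq]
  rw [Finset.sum_comm]



/-- Key quadratic-growth inequality for the convex reformulation of LQR:
if the first-order optimality inequality `tr(Q⋆(X − X⋆)) + tr(2(RK⋆)ᵀY) ≥ 0` holds,
then `f(Y,X) − f(0,X⋆) ≥ tr(X⁻¹YᵀRY) ≥ λ_min(R) λ_min(X⁻¹) ‖Y‖_F²`. -/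
theorem lqr_cvx_quadratic_growth {n m : ℕ}
    (Qstar : Matrix (Fin n) (Fin n) ℝ) (hQstar : Qstar.IsSymm)
    (R : Matrix (Fin m) (Fin m) ℝ) (hR : R.PosDef)
    (Kstar : Matrix (Fin m) (Fin n) ℝ)
    (X Xstar : Matrix (Fin n) (Fin n) ℝ) (hX : X.PosDef) (hXstar : Xstar.PosDef)
    (Y : Matrix (Fin m) (Fin n) ℝ)
    (hfoc : 0 ≤ (Qstar * (X - Xstar)).trace + 2 * ((R * Kstar)ᵀ * Y).trace) :
    (X⁻¹ * (Yᵀ * R * Y)).trace ≤ lqrCvx Qstar R Kstar Y X - lqrCvx Qstar R Kstar 0 Xstar ∧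
      minEig hR.posSemidef.1 * minEig hX.inv.1 * ‖Y‖ ^ 2 ≤ (X⁻¹ * (Yᵀ * R * Y)).trace := by
  constructor
  · -- part 1
    have hRt : Rᵀ = R := by
      have := hR.1
      rwa [Matrix.IsHermitian, Matrix.conjTranspose_eq_transpose_of_trivial] at this
    have hzero : lqrCvx Qstar R Kstar 0 Xstar = (Qstar * Xstar).trace := by
      simp [lqrCvx]
    have cross1 : (Kstarᵀ * (R * Y)).trace = ((R * Kstar)ᵀ * Y).trace := by
      rw [Matrix.transpose_mul, hRt, Matrix.mul_assoc]
    have cross2 : (Yᵀ * (R * Kstar)).trace = ((R * Kstar)ᵀ * Y).trace := by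
      rw [← Matrix.trace_transpose (Yᵀ * (R * Kstar)), Matrix.transpose_mul,
        Matrix.transpose_transpose]
    have hQ : (Qstar * (X - Xstar)).trace = (Qstar * X).trace - (Qstar * Xstar).trace := by
      rw [Matrix.mul_sub, Matrix.trace_sub]
    rw [hzero]
    unfold lqrCvx
    rw [Matrix.trace_add, Matrix.trace_add, Matrix.trace_add]
    rw [hQ] at hfoc
    linarith [cross1, cross2]
  · -- part 2
    have hXi := hX.inv
    have hA1 : (Y * X⁻¹ * Yᵀ).PosSemidef := by
      simpa [Matrix.conjTranspose_eq_transpose_of_trivial] using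
        hXi.posSemidef.mul_mul_conjTranspose_same Y
    have hYtY : (Yᵀ * Y).PosSemidef := by
      simpa [Matrix.conjTranspose_eq_transpose_of_trivial] using
        Matrix.posSemidef_conjTranspose_mul_self Y
    have e1 : (X⁻¹ * (Yᵀ * R * Y)).trace = ((Y * X⁻¹ * Yᵀ) * R).trace := by
      calc (X⁻¹ * (Yᵀ * R * Y)).trace
          = ((X⁻¹ * Yᵀ * R) * Y).trace := by rw [← Matrix.mul_assoc, ← Matrix.mul_assoc]
        _ = (Y * (X⁻¹ * Yᵀ * R)).trace := Matrix.trace_mul_comm _ _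
        _ = ((Y * X⁻¹ * Yᵀ) * R).trace := by rw [← Matrix.mul_assoc, ← Matrix.mul_assoc]
    have e2 : (Y * X⁻¹ * Yᵀ).trace = ((Yᵀ * Y) * X⁻¹).trace := Matrix.trace_mul_cycle Y X⁻¹ Yᵀ
    have h1 : minEig hR.posSemidef.1 * (Y * X⁻¹ * Yᵀ).trace ≤ ((Y * X⁻¹ * Yᵀ) * R).trace :=
      minEig_mul_trace_le hA1 hR.posSemidef
    have h2 : minEig hX.inv.1 * (Yᵀ * Y).trace ≤ ((Yᵀ * Y) * X⁻¹).trace :=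
      minEig_mul_trace_le hYtY hXi.posSemidef
    have hnorm := trace_transpose_mul_self_eq_norm_sq Y
    have hcR : 0 ≤ minEig hR.posSemidef.1 := minEig_nonneg hR.posSemidef
    rw [e1]
    calc minEig hR.posSemidef.1 * minEig hX.inv.1 * ‖Y‖ ^ 2
        = minEig hR.posSemidef.1 * (minEig hX.inv.1 * (Yᵀ * Y).trace) := by
          rw [hnorm]; ring
      _ ≤ minEig hR.posSemidef.1 * ((Yᵀ * Y) * X⁻¹).trace := by
          exact mul_le_mul_of_nonneg_left h2 hcR
      _ = minEig hR.posSemidef.1 * (Y * X⁻¹ * Yᵀ).trace := by rw [e2]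
      _ ≤ ((Y * X⁻¹ * Yᵀ) * R).trace := h1
end

section
/- Let x: [0,∞) → ℝⁿ and u: [0,∞) → ℝᵐ satisfy ẋ = Ax + Bu with x(0) = x₀, x, u square-integrable, and x(t) → 0 as t → ∞. Then the Gramian blocks Z₁₁ = ∫₀^∞ x xᵀ dt, Z₁₂ = ∫₀^∞ x uᵀ dt satisfy the linear constraint A Z₁₁ + B Z₁₂ᵀ + Z₁₁ Aᵀ + Z₁₂ Bᵀ + x₀x₀ᵀ = 0. -/
open MeasureTheory Matrix ENNReal

private lemma l2_integrable_mul {f g : ℝ → ℝ} {μ : Measure ℝ}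
    (hf : MemLp f 2 μ) (hg : MemLp g 2 μ) :
    Integrable (fun t => f t * g t) μ := by
  rw [← memLp_one_iff_integrable]
  have h : (1 : ℝ≥0∞) / 1 = 1 / 2 + 1 / 2 := by
    rw [ENNReal.add_halves]; norm_num
  exact hg.smul (r := 1) hf

/-- Trajectory Gramians satisfy the SDP linear constraint: if `ẋ = Ax + Bu`,
`x, u` are (coordinatewise) square-integrable on `[0,∞)` and `x(t) → 0`, then the
Gramian blocks `Z₁₁ = ∫ x xᵀ`, `Z₁₂ = ∫ x uᵀ` satisfy
`A Z₁₁ + B Z₁₂ᵀ + Z₁₁ Aᵀ + Z₁₂ Bᵀ + x₀ x₀ᵀ = 0`. -/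
theorem gramian_linear_constraint {n m : ℕ}
    (A : Matrix (Fin n) (Fin n) ℝ) (B : Matrix (Fin n) (Fin m) ℝ)
    (x : ℝ → Fin n → ℝ) (u : ℝ → Fin m → ℝ)
    (hdyn : ∀ i, ∀ t : ℝ, 0 ≤ t →
      HasDerivAt (fun s => x s i) ((A *ᵥ x t + B *ᵥ u t) i) t)
    (hxL2 : ∀ i, MemLp (fun t => x t i) 2 (volume.restrict (Set.Ici (0 : ℝ))))
    (huL2 : ∀ j, MemLp (fun t => u t j) 2 (volume.restrict (Set.Ici (0 : ℝ))))
    (hlim : Filter.Tendsto x Filter.atTop (nhds 0)) :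
    A * (Matrix.of fun i j => ∫ t in Set.Ici (0 : ℝ), x t i * x t j) +
        B * (Matrix.of fun i j => ∫ t in Set.Ici (0 : ℝ), x t i * u t j)ᵀ +
        (Matrix.of fun i j => ∫ t in Set.Ici (0 : ℝ), x t i * x t j) * Aᵀ +
        (Matrix.of fun i j => ∫ t in Set.Ici (0 : ℝ), x t i * u t j) * Bᵀ +
        Matrix.vecMulVec (x 0) (x 0) = 0 := by
  set μ := volume.restrict (Set.Ici (0 : ℝ)) with hμ
  -- L² membership of the vector field coordinates
  have hvL2 : ∀ i, MemLp (fun t => (A *ᵥ x t + B *ᵥ u t) i) 2 μ := by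
    intro i
    have h1 : MemLp (fun t => ∑ k, A i k * x t k) 2 μ :=
      memLp_finset_sum _ (fun k _ => (hxL2 k).const_mul (A i k))
    have h2 : MemLp (fun t => ∑ l, B i l * u t l) 2 μ :=
      memLp_finset_sum _ (fun l _ => (huL2 l).const_mul (B i l))
    have h := h1.add h2
    convert h using 1
    ext t; simp [Matrix.mulVec, dotProduct]
  have hInt_xx : ∀ k j, Integrable (fun t => x t k * x t j) μ :=
    fun k j => l2_integrable_mul (hxL2 k) (hxL2 j)
  have hInt_xu : ∀ k l, Integrable (fun t => x t k * u t l) μ :=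
    fun k l => l2_integrable_mul (hxL2 k) (huL2 l)
  have hInt_ux : ∀ l k, Integrable (fun t => u t l * x t k) μ :=
    fun l k => l2_integrable_mul (huL2 l) (hxL2 k)
  -- pointwise limits of coordinates
  have hlim' : ∀ i, Filter.Tendsto (fun t => x t i) Filter.atTop (nhds 0) := by
    intro i
    have := tendsto_pi_nhds.mp hlim i
    simpa using this
  -- main entrywise identity
  have key : ∀ i j,
      (∫ t in Set.Ici (0 : ℝ),
        ((A *ᵥ x t + B *ᵥ u t) i * x t j + x t i * (A *ᵥ x t + B *ᵥ u t) j))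
      = -(x 0 i * x 0 j) := by
    intro i j
    have hderiv : ∀ t ∈ Set.Ici (0 : ℝ),
        HasDerivAt (fun s => x s i * x s j)
          ((A *ᵥ x t + B *ᵥ u t) i * x t j + x t i * (A *ᵥ x t + B *ᵥ u t) j) t :=
      fun t ht => (hdyn i t ht).mul (hdyn j t ht)
    have hf'int : IntegrableOn (fun t =>
        (A *ᵥ x t + B *ᵥ u t) i * x t j + x t i * (A *ᵥ x t + B *ᵥ u t) j)
        (Set.Ioi (0 : ℝ)) volume := by
      have h1 : Integrable (fun t => (A *ᵥ x t + B *ᵥ u t) i * x t j) μ :=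
        l2_integrable_mul (hvL2 i) (hxL2 j)
      have h2 : Integrable (fun t => x t i * (A *ᵥ x t + B *ᵥ u t) j) μ :=
        l2_integrable_mul (hxL2 i) (hvL2 j)
      exact MeasureTheory.IntegrableOn.mono_set (h1.add h2) Set.Ioi_subset_Ici_self
    have htend : Filter.Tendsto (fun t => x t i * x t j) Filter.atTop (nhds 0) := by
      have := (hlim' i).mul (hlim' j)
      simpa using this
    have := MeasureTheory.integral_Ioi_of_hasDerivAt_of_tendsto' hderiv hf'int htend
    rw [MeasureTheory.integral_Ici_eq_integral_Ioi, this]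
    ring
  -- expand the integrand and compute the integral as sums
  have key2 : ∀ i j,
      ((∑ k, A i k * ∫ t in Set.Ici (0 : ℝ), x t k * x t j)
        + ∑ l, B i l * ∫ t in Set.Ici (0 : ℝ), x t j * u t l)
      + ((∑ k, A j k * ∫ t in Set.Ici (0 : ℝ), x t i * x t k)
        + ∑ l, B j l * ∫ t in Set.Ici (0 : ℝ), x t i * u t l)
      = -(x 0 i * x 0 j) := by
    intro i j
    rw [← key i j]
    have e1 : ∀ t, (A *ᵥ x t + B *ᵥ u t) i * x t j + x t i * (A *ᵥ x t + B *ᵥ u t) j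
        = ((∑ k, A i k * (x t k * x t j)) + ∑ l, B i l * (x t j * u t l))
          + ((∑ k, A j k * (x t i * x t k)) + ∑ l, B j l * (x t i * u t l)) := by
      intro t
      simp only [Pi.add_apply, Matrix.mulVec, dotProduct, add_mul, mul_add,
        Finset.sum_mul, Finset.mul_sum]
      congr 1
      · congr 1
        · exact Finset.sum_congr rfl fun k _ => by ring
        · exact Finset.sum_congr rfl fun l _ => by ring
      · congr 1
        · exact Finset.sum_congr rfl fun k _ => by ring
        · exact Finset.sum_congr rfl fun l _ => by ring
    have I1 : Integrable (fun t => ∑ k, A i k * (x t k * x t j)) μ :=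
      integrable_finset_sum _ (fun k _ => (hInt_xx k j).const_mul _)
    have I2 : Integrable (fun t => ∑ l, B i l * (x t j * u t l)) μ :=
      integrable_finset_sum _ (fun l _ => (hInt_xu j l).const_mul _)
    have I3 : Integrable (fun t => ∑ k, A j k * (x t i * x t k)) μ :=
      integrable_finset_sum _ (fun k _ => (hInt_xx i k).const_mul _)
    have I4 : Integrable (fun t => ∑ l, B j l * (x t i * u t l)) μ :=
      integrable_finset_sum _ (fun l _ => (hInt_xu i l).const_mul _)
    calc ((∑ k, A i k * ∫ t in Set.Ici (0 : ℝ), x t k * x t j)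
        + ∑ l, B i l * ∫ t in Set.Ici (0 : ℝ), x t j * u t l)
      + ((∑ k, A j k * ∫ t in Set.Ici (0 : ℝ), x t i * x t k)
        + ∑ l, B j l * ∫ t in Set.Ici (0 : ℝ), x t i * u t l)
        = ((∫ t in Set.Ici (0 : ℝ), ∑ k, A i k * (x t k * x t j))
          + ∫ t in Set.Ici (0 : ℝ), ∑ l, B i l * (x t j * u t l))
          + ((∫ t in Set.Ici (0 : ℝ), ∑ k, A j k * (x t i * x t k))
          + ∫ t in Set.Ici (0 : ℝ), ∑ l, B j l * (x t i * u t l)) := by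
          rw [integral_finset_sum _ (fun k _ => (hInt_xx k j).const_mul _),
            integral_finset_sum _ (fun l _ => (hInt_xu j l).const_mul _),
            integral_finset_sum _ (fun k _ => (hInt_xx i k).const_mul _),
            integral_finset_sum _ (fun l _ => (hInt_xu i l).const_mul _)]
          simp only [MeasureTheory.integral_const_mul]
          rfl
      _ = ∫ t in Set.Ici (0 : ℝ),
            (((∑ k, A i k * (x t k * x t j)) + ∑ l, B i l * (x t j * u t l))
             + ((∑ k, A j k * (x t i * x t k)) + ∑ l, B j l * (x t i * u t l))) := by
          rw [← integral_add I1 I2, ← integral_add I3 I4]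
          exact (integral_add (I1.add I2) (I3.add I4)).symm
      _ = ∫ t in Set.Ici (0 : ℝ),
            ((A *ᵥ x t + B *ᵥ u t) i * x t j + x t i * (A *ᵥ x t + B *ᵥ u t) j) := by
          exact integral_congr_ae (Filter.Eventually.of_forall fun t => (e1 t).symm)
  -- conclude the matrix identity entrywise
  ext i j
  simp only [Matrix.add_apply, Matrix.mul_apply, Matrix.transpose_apply, Matrix.of_apply,
    Matrix.vecMulVec_apply, Matrix.zero_apply]
  have h3 : (∑ k, (∫ t in Set.Ici (0 : ℝ), x t i * x t k) * A j k)
      = ∑ k, A j k * ∫ t in Set.Ici (0 : ℝ), x t i * x t k :=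
    Finset.sum_congr rfl fun k _ => mul_comm _ _
  have h4 : (∑ l, (∫ t in Set.Ici (0 : ℝ), x t i * u t l) * B j l)
      = ∑ l, B j l * ∫ t in Set.Ici (0 : ℝ), x t i * u t l :=
    Finset.sum_congr rfl fun l _ => mul_comm _ _
  rw [h3, h4]
  linarith [key2 i j]
end
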